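/- arXiv:1906.10658 — 5 statements merged into one kernel-verified Lean document; each statement's English description precedes it below -/
import Mathlib

section
/- Let P be a countable cancellative abelian semigroup with Grothendieck group 𝔊(P), let G be a group, and let C(P,G) be the group of all functions P → G under pointwise multiplication. For h ∈ 𝔊(P) and f ∈ C(P,G) define T_h(f)(p) = f(p − h) if p − h ∈ P and T_h(f)(p) = 1_G otherwise. Define f₁ ∼ f₂ if there exists p ∈ P with f₁(q) = f₂(q) for all q ∈ P with q − p ∈ P. Then ∼ is a congruence on C(P,G), the quotient Q(P,G) := C(P,G)/∼ is a group, each T_h descends to an automorphism of Q(P,G), and h ↦ T_h is a group homomorphism 𝔊(P) → Aut(Q(P,G)). -/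
open scoped Classical

/-- Let `𝔾` be the Grothendieck group of a countable cancellative abelian
semigroup `P` (realized as an additive submonoid `Pm` of `𝔾` with `𝔾 = Pm - Pm`), and `G`
a group. On `C(P,G) = Pm → G` with pointwise multiplication, the shifts
`T_h(f)(p) = f(p−h)` (if `p−h ∈ P`, else `1`) and the eventual-equality relation `R` satisfy:
`R` is a congruence (so `Q(P,G) = C(P,G)/R` is a group), each `T_h` descends to an
automorphism of `Q(P,G)`, and `h ↦ T_h` is a homomorphism `𝔾 → Aut(Q(P,G))`. -/
theorem shift_action_on_QPG (𝔾 : Type) [AddCommGroup 𝔾] [Countable 𝔾]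
    (Pm : AddSubmonoid 𝔾)
    (hgen : ∀ g : 𝔾, ∃ p q : 𝔾, p ∈ Pm ∧ q ∈ Pm ∧ g = p - q)
    (G : Type) [Group G] :
    let R : (Pm → G) → (Pm → G) → Prop := fun f₁ f₂ =>
      ∃ p : Pm, ∀ q : Pm, (q : 𝔾) - (p : 𝔾) ∈ Pm → f₁ q = f₂ q
    let T : 𝔾 → (Pm → G) → (Pm → G) := fun h f q =>
      if hq : (q : 𝔾) - h ∈ Pm then f ⟨(q : 𝔾) - h, hq⟩ else 1
    -- `R` is an equivalence relation
    Equivalence R ∧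
    -- `R` is a congruence: compatible with multiplication and inversion,
    -- so the quotient `Q(P,G)` is a group
    (∀ f₁ f₂ g₁ g₂, R f₁ g₁ → R f₂ g₂ → R (f₁ * f₂) (g₁ * g₂)) ∧
    (∀ f₁ f₂, R f₁ f₂ → R f₁⁻¹ f₂⁻¹) ∧
    -- each `T_h` descends to the quotient
    (∀ h f₁ f₂, R f₁ f₂ → R (T h f₁) (T h f₂)) ∧
    -- the descended map is multiplicative (an endomorphism of `Q(P,G)`)
    (∀ h f₁ f₂, R (T h (f₁ * f₂)) (T h f₁ * T h f₂)) ∧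
    -- `h ↦ T_h` is a homomorphism; in particular each `T_h` is invertible on the
    -- quotient (with inverse induced by `T_{-h}`), hence an automorphism
    (∀ f, R (T 0 f) f) ∧
    (∀ h₁ h₂ f, R (T (h₁ + h₂) f) (T h₁ (T h₂ f))) ∧
    (∀ h f, R (T h (T (-h) f)) f) ∧
    (∀ h f, R (T (-h) (T h f)) f) := by
  intro R T
  -- key: for any h and c ∈ Pm, eventually q - h ∈ Pm and (q - h) - c ∈ Pm
  have key : ∀ (h : 𝔾) (c : Pm), ∃ p : Pm, ∀ q : 𝔾, q - (p : 𝔾) ∈ Pm →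
      ((q - h) - (c : 𝔾) ∈ Pm ∧ q - h ∈ Pm) := by
    intro h c
    obtain ⟨a, b, ha, hb, hab⟩ := hgen h
    refine ⟨c + ⟨a, ha⟩, fun q hq => ?_⟩
    have h1 : (q - h) - (c : 𝔾) = (q - ((c : 𝔾) + a)) + b := by rw [hab]; abel
    have h2 : (q - h) - (c : 𝔾) ∈ Pm := by rw [h1]; exact Pm.add_mem hq hb
    refine ⟨h2, ?_⟩
    have h3 : q - h = ((q - h) - (c : 𝔾)) + (c : 𝔾) := by abel
    rw [h3]; exact Pm.add_mem h2 c.2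
  have hrefl : ∀ f, R f f := fun f => ⟨⟨0, Pm.zero_mem⟩, fun q _ => rfl⟩
  have hsymm : ∀ {f₁ f₂}, R f₁ f₂ → R f₂ f₁ := by
    rintro f₁ f₂ ⟨p, hp⟩; exact ⟨p, fun q hq => (hp q hq).symm⟩
  have htrans : ∀ {f₁ f₂ f₃}, R f₁ f₂ → R f₂ f₃ → R f₁ f₃ := by
    rintro f₁ f₂ f₃ ⟨p₁, hp₁⟩ ⟨p₂, hp₂⟩
    refine ⟨p₁ + p₂, fun q hq => ?_⟩
    have e1 : (q : 𝔾) - (p₁ : 𝔾) = ((q : 𝔾) - ((p₁ : 𝔾) + (p₂ : 𝔾))) + (p₂ : 𝔾) := by abel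
    have e2 : (q : 𝔾) - (p₂ : 𝔾) = ((q : 𝔾) - ((p₁ : 𝔾) + (p₂ : 𝔾))) + (p₁ : 𝔾) := by abel
    rw [hp₁ q (by rw [e1]; exact Pm.add_mem hq p₂.2),
        hp₂ q (by rw [e2]; exact Pm.add_mem hq p₁.2)]
  have hdesc : ∀ h f₁ f₂, R f₁ f₂ → R (T h f₁) (T h f₂) := by
    rintro h f₁ f₂ ⟨p, hp⟩
    obtain ⟨p', hp'⟩ := key h p
    refine ⟨p', fun q hq => ?_⟩
    obtain ⟨h1, h2⟩ := hp' (q : 𝔾) hq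
    show (if hq' : (q : 𝔾) - h ∈ Pm then f₁ ⟨(q : 𝔾) - h, hq'⟩ else 1)
       = (if hq' : (q : 𝔾) - h ∈ Pm then f₂ ⟨(q : 𝔾) - h, hq'⟩ else 1)
    rw [dif_pos h2, dif_pos h2]
    exact hp ⟨(q : 𝔾) - h, h2⟩ h1
  refine ⟨⟨hrefl, hsymm, htrans⟩, ?_, ?_, hdesc, ?_, ?_, ?_, ?_, ?_⟩
  · -- multiplication
    rintro f₁ f₂ g₁ g₂ ⟨p₁, hp₁⟩ ⟨p₂, hp₂⟩
    refine ⟨p₁ + p₂, fun q hq => ?_⟩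
    have e1 : (q : 𝔾) - (p₁ : 𝔾) = ((q : 𝔾) - ((p₁ : 𝔾) + (p₂ : 𝔾))) + (p₂ : 𝔾) := by abel
    have e2 : (q : 𝔾) - (p₂ : 𝔾) = ((q : 𝔾) - ((p₁ : 𝔾) + (p₂ : 𝔾))) + (p₁ : 𝔾) := by abel
    show f₁ q * f₂ q = g₁ q * g₂ q
    rw [hp₁ q (by rw [e1]; exact Pm.add_mem hq p₂.2),
        hp₂ q (by rw [e2]; exact Pm.add_mem hq p₁.2)]
  · -- inversion
    rintro f₁ f₂ ⟨p, hp⟩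
    refine ⟨p, fun q hq => ?_⟩
    show (f₁ q)⁻¹ = (f₂ q)⁻¹
    rw [hp q hq]
  · -- T h is multiplicative (in fact pointwise)
    intro h f₁ f₂
    refine ⟨⟨0, Pm.zero_mem⟩, fun q _ => ?_⟩
    show (if hq : (q : 𝔾) - h ∈ Pm then (f₁ * f₂) ⟨(q : 𝔾) - h, hq⟩ else 1)
       = (if hq : (q : 𝔾) - h ∈ Pm then f₁ ⟨(q : 𝔾) - h, hq⟩ else 1)
       * (if hq : (q : 𝔾) - h ∈ Pm then f₂ ⟨(q : 𝔾) - h, hq⟩ else 1)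
    by_cases hq : (q : 𝔾) - h ∈ Pm
    · rw [dif_pos hq, dif_pos hq, dif_pos hq]; rfl
    · rw [dif_neg hq, dif_neg hq, dif_neg hq, one_mul]
  · -- T 0 = id
    intro f
    refine ⟨⟨0, Pm.zero_mem⟩, fun q _ => ?_⟩
    have h0 : (q : 𝔾) - 0 ∈ Pm := by rw [sub_zero]; exact q.2
    show (if hq : (q : 𝔾) - 0 ∈ Pm then f ⟨(q : 𝔾) - 0, hq⟩ else 1) = f q
    rw [dif_pos h0]
    congr 1
    ext
    simp
  · -- T (h₁ + h₂) = T h₁ ∘ T h₂ eventually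
    intro h₁ h₂ f
    obtain ⟨p, hp⟩ := key h₁ ⟨0, Pm.zero_mem⟩
    refine ⟨p, fun q hq => ?_⟩
    obtain ⟨-, h1⟩ := hp (q : 𝔾) hq
    show (if hq' : (q : 𝔾) - (h₁ + h₂) ∈ Pm then f ⟨(q : 𝔾) - (h₁ + h₂), hq'⟩ else 1)
       = (if hq' : (q : 𝔾) - h₁ ∈ Pm then
            (if hq'' : (((q : 𝔾) - h₁) - h₂) ∈ Pm then f ⟨((q : 𝔾) - h₁) - h₂, hq''⟩ else 1)
          else 1)
    rw [dif_pos h1]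
    have e : ((q : 𝔾) - h₁) - h₂ = (q : 𝔾) - (h₁ + h₂) := by abel
    by_cases hc : (q : 𝔾) - (h₁ + h₂) ∈ Pm
    · rw [dif_pos hc, dif_pos (e ▸ hc : ((q : 𝔾) - h₁) - h₂ ∈ Pm)]
      congr 1
      exact Subtype.ext e.symm
    · rw [dif_neg hc, dif_neg (fun hc' => hc (e ▸ hc'))]
  · -- T h ∘ T (-h) = id eventually
    intro h f
    obtain ⟨p, hp⟩ := key h ⟨0, Pm.zero_mem⟩
    refine ⟨p, fun q hq => ?_⟩
    obtain ⟨-, h1⟩ := hp (q : 𝔾) hq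
    show (if hq' : (q : 𝔾) - h ∈ Pm then
            (if hq'' : (((q : 𝔾) - h) - (-h)) ∈ Pm then f ⟨((q : 𝔾) - h) - (-h), hq''⟩ else 1)
          else 1) = f q
    rw [dif_pos h1]
    have e : ((q : 𝔾) - h) - (-h) = (q : 𝔾) := by abel
    have h2 : ((q : 𝔾) - h) - (-h) ∈ Pm := by rw [e]; exact q.2
    rw [dif_pos h2]
    congr 1
    exact Subtype.ext e
  · -- T (-h) ∘ T h = id eventually
    intro h f
    obtain ⟨p, hp⟩ := key (-h) ⟨0, Pm.zero_mem⟩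
    refine ⟨p, fun q hq => ?_⟩
    obtain ⟨-, h1⟩ := hp (q : 𝔾) hq
    show (if hq' : (q : 𝔾) - (-h) ∈ Pm then
            (if hq'' : (((q : 𝔾) - (-h)) - h) ∈ Pm then f ⟨((q : 𝔾) - (-h)) - h, hq''⟩ else 1)
          else 1) = f q
    rw [dif_pos h1]
    have e : ((q : 𝔾) - (-h)) - h = (q : 𝔾) := by abel
    have h2 : ((q : 𝔾) - (-h)) - h ∈ Pm := by rw [e]; exact q.2
    rw [dif_pos h2]
    congr 1
    exact Subtype.ext e
end

section
/- Let Λ be a row-finite source-free k-graph and let x ∈ Λ^∞ be an infinite path. Then T := {v ∈ Λ^0 : vΛx(p,p) ≠ ∅ for some p ∈ ℕ^k} is a maximal tail of Λ. -/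
/-- A (row-finite, source-free, countable) `P`-graph: a countable small category with a
degree functor `d` to `P` satisfying the unique factorization property. -/
structure PGraph (P : Type) [AddCancelCommMonoid P] where
  V : Type
  E : Type
  countableE : Countable E
  r : E → V
  s : E → V
  d : E → P
  vert : V → E
  comp : E → E → E
  r_vert : ∀ v, r (vert v) = v
  s_vert : ∀ v, s (vert v) = v
  d_vert : ∀ v, d (vert v) = 0
  comp_vert_left : ∀ e, comp (vert (r e)) e = e
  comp_vert_right : ∀ e, comp e (vert (s e)) = e
  r_comp : ∀ e f, s e = r f → r (comp e f) = r e
  s_comp : ∀ e f, s e = r f → s (comp e f) = s f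
  d_comp : ∀ e f, s e = r f → d (comp e f) = d e + d f
  comp_assoc : ∀ e f g, s e = r f → s f = r g → comp (comp e f) g = comp e (comp f g)
  factor : ∀ e a b, d e = a + b →
    ∃! pr : E × E, s pr.1 = r pr.2 ∧ comp pr.1 pr.2 = e ∧ d pr.1 = a ∧ d pr.2 = b
  rowFinite : ∀ v p, {e : E | r e = v ∧ d e = p}.Finite
  sourceFree : ∀ v p, ∃ e, r e = v ∧ d e = p

/-- A self-similar `P`-graph `(G, Λ)`: an action of `G` on `Λ` together with a
restriction map satisfying the self-similarity axioms. -/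
structure SelfSimilar (P : Type) [AddCancelCommMonoid P] (G : Type) [Group G]
    (Λ : PGraph P) where
  actV : G → Λ.V → Λ.V
  act : G → Λ.E → Λ.E
  res : G → Λ.E → G
  actV_one : ∀ v, actV 1 v = v
  actV_mul : ∀ g h v, actV (g * h) v = actV g (actV h v)
  act_one : ∀ e, act 1 e = e
  act_mul : ∀ g h e, act (g * h) e = act g (act h e)
  d_act : ∀ g e, Λ.d (act g e) = Λ.d e
  s_act : ∀ g e, Λ.s (act g e) = actV g (Λ.s e)
  r_act : ∀ g e, Λ.r (act g e) = actV g (Λ.r e)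
  act_vert : ∀ g v, act g (Λ.vert v) = Λ.vert (actV g v)
  act_comp : ∀ g e f, Λ.s e = Λ.r f →
    act g (Λ.comp e f) = Λ.comp (act g e) (act (res g e) f)
  res_vert : ∀ g v, res g (Λ.vert v) = g
  res_comp : ∀ g e f, Λ.s e = Λ.r f → res g (Λ.comp e f) = res (res g e) f
  res_one : ∀ e, res 1 e = 1
  res_mul : ∀ g h e, res (g * h) e = res g (act h e) * res h e

/-- Pseudo-freeness: `g·μ = μ` and `g|_μ = 1` imply `g = 1`. -/
def SelfSimilar.PseudoFree {P : Type} [AddCancelCommMonoid P] {G : Type} [Group G]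
    {Λ : PGraph P} (σ : SelfSimilar P G Λ) : Prop :=
  ∀ g e, σ.act g e = e → σ.res g e = 1 → g = 1

/-- An infinite path of a `P`-graph: a degree-preserving functor from `Ω_P` to `Λ`,
recorded by its segments `val p q` (only the values with `q - p ∈ P` are constrained). -/
structure InfPath (P : Type) [AddCancelCommMonoid P] (Λ : PGraph P) where
  val : P → P → Λ.E
  d_val : ∀ p a, Λ.d (val p (p + a)) = a
  vert_val : ∀ p, val p p = Λ.vert (Λ.r (val p p))
  r_val : ∀ p a, Λ.r (val p (p + a)) = Λ.r (val p p)
  s_val : ∀ p a, Λ.s (val p (p + a)) = Λ.r (val (p + a) (p + a))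
  comp_val : ∀ p a b, Λ.comp (val p (p + a)) (val (p + a) (p + a + b)) = val p (p + a + b)

/-- The segments of the infinite path `g · x`, given by `(g·x)(p,q) = g|_{x(0,p)} · x(p,q)`. -/
def actPathVal {P : Type} [AddCancelCommMonoid P] {G : Type} [Group G] {Λ : PGraph P}
    (σ : SelfSimilar P G Λ) (g : G) (x : InfPath P Λ) : P → P → Λ.E :=
  fun p q => σ.act (σ.res g (x.val 0 p)) (x.val p q)

/-- `(μ, g, ν)` is a cycline triple: `s μ = g · s ν`, and `μ (g·x) = ν x` for every
infinite path `x` with range `s ν` (expressed via cofinal initial segments). -/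
def Cycline {P : Type} [AddCancelCommMonoid P] {G : Type} [Group G] {Λ : PGraph P}
    (σ : SelfSimilar P G Λ) (μ : Λ.E) (g : G) (ν : Λ.E) : Prop :=
  Λ.s μ = σ.actV g (Λ.s ν) ∧
  ∀ x : InfPath P Λ, Λ.r (x.val 0 0) = Λ.s ν → ∀ a : P,
    Λ.comp μ (actPathVal σ g x 0 (Λ.d ν + a)) = Λ.comp ν (x.val 0 (Λ.d μ + a))

/-- A maximal tail of a `P`-graph. -/
def MaximalTail {P : Type} [AddCancelCommMonoid P] (Λ : PGraph P) (T : Set Λ.V) : Prop :=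
  T.Nonempty ∧
  (∀ v ∈ T, ∀ w, (∃ e, Λ.r e = w ∧ Λ.s e = v) → w ∈ T) ∧
  (∀ v ∈ T, ∀ p, ∃ e, Λ.r e = v ∧ Λ.d e = p ∧ Λ.s e ∈ T) ∧
  (∀ v₁ ∈ T, ∀ v₂ ∈ T, ∃ w ∈ T,
    (∃ e, Λ.r e = v₁ ∧ Λ.s e = w) ∧ (∃ f, Λ.r f = v₂ ∧ Λ.s f = w))

/-- For a row-finite source-free `k`-graph `Λ` and an infinite path `x`,
the set `T = {v : vΛx(p,p) ≠ ∅ for some p}` is a maximal tail of `Λ`. -/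
theorem maximalTail_of_infinite_path (k : ℕ) (Λ : PGraph (Fin k → ℕ))
    (x : InfPath (Fin k → ℕ) Λ) :
    MaximalTail Λ
      {v | ∃ (p : Fin k → ℕ) (e : Λ.E), Λ.r e = v ∧ Λ.s e = Λ.r (x.val p p)} := by
  refine ⟨⟨Λ.r (x.val 0 0), 0, Λ.vert (Λ.r (x.val 0 0)), Λ.r_vert _, Λ.s_vert _⟩, ?_, ?_, ?_⟩
  · rintro v ⟨p, e, he, hs⟩ w ⟨f, hf, hsf⟩
    have hfe : Λ.s f = Λ.r e := by rw [hsf, he]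
    exact ⟨p, Λ.comp f e, by rw [Λ.r_comp f e hfe, hf], by rw [Λ.s_comp f e hfe, hs]⟩
  · rintro v ⟨p, e, he, hs⟩ q
    have hse : Λ.s e = Λ.r (x.val p (p + q)) := by rw [hs, x.r_val]
    have hd : Λ.d (Λ.comp e (x.val p (p + q))) = q + Λ.d e := by
      rw [Λ.d_comp _ _ hse, x.d_val, add_comm]
    obtain ⟨⟨g, h⟩, ⟨hgh, hcomp, hdg, hdh⟩, -⟩ := Λ.factor _ q (Λ.d e) hd
    have hrg : Λ.r g = v := by
      have h1 := Λ.r_comp g h hgh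
      rw [hcomp, Λ.r_comp e _ hse, he] at h1
      exact h1.symm
    have hsh : Λ.s h = Λ.r (x.val (p + q) (p + q)) := by
      have h1 := Λ.s_comp g h hgh
      rw [hcomp, Λ.s_comp e _ hse, x.s_val] at h1
      exact h1.symm
    exact ⟨g, hrg, hdg, p + q, h, hgh.symm, hsh⟩
  · rintro v₁ ⟨p₁, e₁, he₁, hs₁⟩ v₂ ⟨p₂, e₂, he₂, hs₂⟩
    set q : Fin k → ℕ := fun i => max (p₁ i) (p₂ i) with hq
    have h1 : p₁ + (q - p₁) = q := by
      funext i
      simp only [Pi.add_apply, Pi.sub_apply, hq]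
      omega
    have h2 : p₂ + (q - p₂) = q := by
      funext i
      simp only [Pi.add_apply, Pi.sub_apply, hq]
      omega
    refine ⟨Λ.r (x.val q q), ⟨q, Λ.vert (Λ.r (x.val q q)), Λ.r_vert _, Λ.s_vert _⟩, ?_, ?_⟩
    · have hse : Λ.s e₁ = Λ.r (x.val p₁ (p₁ + (q - p₁))) := by rw [hs₁, x.r_val]
      refine ⟨Λ.comp e₁ (x.val p₁ (p₁ + (q - p₁))), by rw [Λ.r_comp _ _ hse, he₁], ?_⟩
      rw [Λ.s_comp _ _ hse, x.s_val, h1]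
    · have hse : Λ.s e₂ = Λ.r (x.val p₂ (p₂ + (q - p₂))) := by rw [hs₂, x.r_val]
      refine ⟨Λ.comp e₂ (x.val p₂ (p₂ + (q - p₂))), by rw [Λ.r_comp _ _ hse, he₂], ?_⟩
      rw [Λ.s_comp _ _ hse, x.s_val, h2]
end

section
/- Let (G,Λ) be a self-similar k-graph with g·v = v for all g ∈ G, v ∈ Λ^0, and let H ⊊ Λ^0 be G-hereditary and G-saturated. Then Λ(Λ^0 \ H) := {μ ∈ Λ : s(μ) ∉ H} is a row-finite source-free k-graph with vertex set Λ^0 \ H (with composition, range and source inherited from Λ, where the range of μ is taken in Λ^0 \ H), and the G-action and restriction map descend to make (G, Λ(Λ^0 \ H)) a self-similar k-graph. -/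
attribute [local instance] Classical.propDecidable

noncomputable def restrictGraph {P : Type} [AddCancelCommMonoid P] (Λ : PGraph P)
    (H : Set Λ.V)
    (hher : ∀ e : Λ.E, Λ.r e ∈ H → Λ.s e ∈ H)
    (hsat : ∀ e : Λ.E, Λ.s e ∈ H → Λ.r e ∈ H) : PGraph P where
  V := {v : Λ.V // v ∉ H}
  E := {e : Λ.E // Λ.s e ∉ H}
  countableE := by haveI := Λ.countableE; infer_instance
  r e := ⟨Λ.r e.1, fun hh => e.2 (hher e.1 hh)⟩
  s e := ⟨Λ.s e.1, e.2⟩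
  d e := Λ.d e.1
  vert v := ⟨Λ.vert v.1, by rw [Λ.s_vert]; exact v.2⟩
  comp e f := if h : Λ.s e.1 = Λ.r f.1 then
      ⟨Λ.comp e.1 f.1, by rw [Λ.s_comp _ _ h]; exact f.2⟩ else e
  r_vert v := Subtype.ext (Λ.r_vert v.1)
  s_vert v := Subtype.ext (Λ.s_vert v.1)
  d_vert v := Λ.d_vert v.1
  comp_vert_left e := by
    have h : Λ.s (Λ.vert (Λ.r e.1)) = Λ.r e.1 := Λ.s_vert _
    exact Subtype.ext (by simp only [dif_pos h]; exact Λ.comp_vert_left e.1)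
  comp_vert_right e := by
    have h : Λ.s e.1 = Λ.r (Λ.vert (Λ.s e.1)) := (Λ.r_vert _).symm
    exact Subtype.ext (by simp only [dif_pos h]; exact Λ.comp_vert_right e.1)
  r_comp e f h := by
    have h' : Λ.s e.1 = Λ.r f.1 := congrArg Subtype.val h
    exact Subtype.ext (by simp only [dif_pos h']; exact Λ.r_comp _ _ h')
  s_comp e f h := by
    have h' : Λ.s e.1 = Λ.r f.1 := congrArg Subtype.val h
    exact Subtype.ext (by simp only [dif_pos h']; exact Λ.s_comp _ _ h')
  d_comp e f h := by
    have h' : Λ.s e.1 = Λ.r f.1 := congrArg Subtype.val h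
    simp only [dif_pos h']; exact Λ.d_comp _ _ h'
  comp_assoc e f g h1 h2 := by
    have h1' : Λ.s e.1 = Λ.r f.1 := congrArg Subtype.val h1
    have h2' : Λ.s f.1 = Λ.r g.1 := congrArg Subtype.val h2
    have h3 : Λ.s (Λ.comp e.1 f.1) = Λ.r g.1 := by rw [Λ.s_comp _ _ h1']; exact h2'
    have h4 : Λ.s e.1 = Λ.r (Λ.comp f.1 g.1) := by rw [Λ.r_comp _ _ h2']; exact h1'
    refine Subtype.ext ?_
    simp only [dif_pos h1', dif_pos h2', dif_pos h3, dif_pos h4]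
    try exact Λ.comp_assoc _ _ _ h1' h2'
  factor e a b hab := by
    obtain ⟨pr, ⟨hc, hcomp, hd1, hd2⟩, huniq⟩ := Λ.factor e.1 a b hab
    have hs2 : Λ.s pr.2 = Λ.s e.1 := by rw [← hcomp, Λ.s_comp _ _ hc]
    have hs2' : Λ.s pr.2 ∉ H := by rw [hs2]; exact e.2
    have hs1 : Λ.s pr.1 ∉ H := fun hh => hs2' (hher pr.2 (hc ▸ hh))
    refine ⟨(⟨pr.1, hs1⟩, ⟨pr.2, hs2'⟩), ⟨Subtype.ext hc, ?_, hd1, hd2⟩, ?_⟩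
    · exact Subtype.ext (by simp only [dif_pos hc]; exact hcomp)
    · rintro ⟨q1, q2⟩ ⟨hqc, hqcomp, hqd1, hqd2⟩
      have hqc' : Λ.s q1.1 = Λ.r q2.1 := congrArg Subtype.val hqc
      have hqcomp' : Λ.comp q1.1 q2.1 = e.1 := by
        have := congrArg Subtype.val hqcomp
        simpa only [dif_pos hqc'] using this
      have heq := huniq (q1.1, q2.1) ⟨hqc', hqcomp', hqd1, hqd2⟩
      have h1 : q1.1 = pr.1 := congrArg Prod.fst heq
      have h2 : q2.1 = pr.2 := congrArg Prod.snd heq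
      exact Prod.ext (Subtype.ext h1) (Subtype.ext h2)
  rowFinite v p := by
    refine ((Λ.rowFinite v.1 p).preimage Subtype.val_injective.injOn).subset ?_
    rintro e ⟨he1, he2⟩
    exact ⟨congrArg Subtype.val he1, he2⟩
  sourceFree v p := by
    obtain ⟨e, hr, hd⟩ := Λ.sourceFree v.1 p
    have hs : Λ.s e ∉ H := fun hh => v.2 (hr ▸ hsat e hh)
    exact ⟨⟨e, hs⟩, Subtype.ext hr, hd⟩

noncomputable def restrictSS {P : Type} [AddCancelCommMonoid P] {G : Type} [Group G]
    {Λ : PGraph P} (σ : SelfSimilar P G Λ)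
    (hFV : ∀ (g : G) (v : Λ.V), σ.actV g v = v)
    (H : Set Λ.V)
    (hher : ∀ e : Λ.E, Λ.r e ∈ H → Λ.s e ∈ H)
    (hsat : ∀ e : Λ.E, Λ.s e ∈ H → Λ.r e ∈ H) :
    SelfSimilar P G (restrictGraph Λ H hher hsat) where
  actV g v := ⟨σ.actV g v.1, by rw [hFV]; exact v.2⟩
  act g e := ⟨σ.act g e.1, by rw [σ.s_act, hFV]; exact e.2⟩
  res g e := σ.res g e.1
  actV_one v := Subtype.ext (σ.actV_one v.1)
  actV_mul g h v := Subtype.ext (σ.actV_mul g h v.1)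
  act_one e := Subtype.ext (σ.act_one e.1)
  act_mul g h e := Subtype.ext (σ.act_mul g h e.1)
  d_act g e := σ.d_act g e.1
  s_act g e := Subtype.ext (σ.s_act g e.1)
  r_act g e := Subtype.ext (by simp only [restrictGraph]; exact σ.r_act g e.1)
  act_vert g v := Subtype.ext (σ.act_vert g v.1)
  act_comp g e f h := by
    have h' : Λ.s e.1 = Λ.r f.1 := congrArg Subtype.val h
    have h'' : Λ.s (σ.act g e.1) = Λ.r (σ.act (σ.res g e.1) f.1) := by
      rw [σ.s_act, σ.r_act, hFV, hFV]; exact h'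
    refine Subtype.ext ?_
    simp only [restrictGraph, dif_pos h', dif_pos h'']
    refine (congrArg (σ.act g) (congrArg Subtype.val (dif_pos h'))).trans ?_
    exact σ.act_comp g e.1 f.1 h'
  res_vert g v := σ.res_vert g v.1
  res_comp g e f h := by
    have h' : Λ.s e.1 = Λ.r f.1 := congrArg Subtype.val h
    simp only [restrictGraph, dif_pos h']
    refine (congrArg (σ.res g) (congrArg Subtype.val (dif_pos h'))).trans ?_
    exact σ.res_comp g e.1 f.1 h'
  res_one e := σ.res_one e.1
  res_mul g h e := σ.res_mul g h e.1

/-- For a self-similar `k`-graph with the action fixing all vertices and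
`H ⊊ Λ⁰` `G`-hereditary and `G`-saturated, `Λ(Λ⁰ \ H) = {μ : s(μ) ∉ H}` is a row-finite
source-free `k`-graph with vertex set `Λ⁰ \ H`, to which the `G`-action and restriction
map descend, making `(G, Λ(Λ⁰ \ H))` a self-similar `k`-graph. -/
theorem quotient_graph_self_similar (k : ℕ) (G : Type) [Group G]
    (Λ : PGraph (Fin k → ℕ)) (σ : SelfSimilar (Fin k → ℕ) G Λ)
    (hFV : ∀ (g : G) (v : Λ.V), σ.actV g v = v)
    (H : Set Λ.V) (hne : H ≠ Set.univ)
    (hactH : ∀ g : G, ∀ v ∈ H, σ.actV g v ∈ H)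
    (hher : ∀ e : Λ.E, Λ.r e ∈ H → Λ.s e ∈ H)
    (hsat : ∀ e : Λ.E, Λ.s e ∈ H → Λ.r e ∈ H) :
    ∃ (Λ' : PGraph (Fin k → ℕ)) (σ' : SelfSimilar (Fin k → ℕ) G Λ')
      (iV : Λ'.V → Λ.V) (iE : Λ'.E → Λ.E),
      Function.Injective iV ∧ Function.Injective iE ∧
      Set.range iV = Hᶜ ∧ Set.range iE = {e : Λ.E | Λ.s e ∉ H} ∧
      (∀ e, Λ.r (iE e) = iV (Λ'.r e)) ∧
      (∀ e, Λ.s (iE e) = iV (Λ'.s e)) ∧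
      (∀ e, Λ.d (iE e) = Λ'.d e) ∧
      (∀ v, iE (Λ'.vert v) = Λ.vert (iV v)) ∧
      (∀ e f, Λ'.s e = Λ'.r f → iE (Λ'.comp e f) = Λ.comp (iE e) (iE f)) ∧
      (∀ g v, iV (σ'.actV g v) = σ.actV g (iV v)) ∧
      (∀ g e, iE (σ'.act g e) = σ.act g (iE e)) ∧
      (∀ g e, σ'.res g e = σ.res g (iE e)) := by
  refine ⟨restrictGraph Λ H hher hsat, restrictSS σ hFV H hher hsat,
    Subtype.val, Subtype.val, Subtype.val_injective, Subtype.val_injective, ?_, ?_,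
    fun e => rfl, fun e => rfl, fun e => rfl, fun v => rfl, ?_, fun g v => rfl,
    fun g e => rfl, fun g e => rfl⟩
  · ext v; simp [restrictGraph]
  · ext e; simp [restrictGraph]
  · intro e f h
    have h' : Λ.s e.1 = Λ.r f.1 := congrArg Subtype.val h
    simp only [restrictGraph, dif_pos h']
    exact congrArg Subtype.val (dif_pos h')
end

section
/- Let A be a C*-algebra and τ: A⁺ → [0,∞] a trace (additive, positively homogeneous, and satisfying τ(a*a) = τ(aa*) for all a ∈ A). If τ is densely defined (i.e., {a ∈ A⁺ : τ(a) < ∞} is dense in A⁺) and lower semicontinuous, then τ is semifinite: for every a ∈ A⁺, τ(a) = sup{τ(b) : 0 ≤ b ≤ a, τ(b) < ∞}. -/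
open scoped ENNReal

section Aux

variable {A : Type} [CStarAlgebra A] [PartialOrder A] [StarOrderedRing A]

lemma tau_mono (τ : A → ℝ≥0∞)
    (hadd : ∀ a b : A, 0 ≤ a → 0 ≤ b → τ (a + b) = τ a + τ b)
    {x y : A} (hx : 0 ≤ x) (hxy : x ≤ y) : τ x ≤ τ y := by
  have hyx : 0 ≤ y - x := sub_nonneg.mpr hxy
  have h := hadd x (y - x) hx hyx
  have hxy' : x + (y - x) = y := by abel
  rw [hxy'] at h
  rw [h]
  exact le_self_add

lemma tau_approx (τ : A → ℝ≥0∞)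
    (hadd : ∀ a b : A, 0 ≤ a → 0 ≤ b → τ (a + b) = τ a + τ b)
    (hsmul : ∀ (a : A) (c : ℝ), 0 ≤ a → 0 ≤ c →
      τ ((c : ℂ) • a) = ENNReal.ofReal c * τ a)
    (htr : ∀ a : A, τ (star a * a) = τ (a * star a))
    {a d : A} (ha : 0 ≤ a) (hd : 0 ≤ d) (hdτ : τ d < ⊤) {l : ℝ} (hl : 0 < l) :
    ∃ b : A, 0 ≤ b ∧ b ≤ a ∧ τ b < ⊤ ∧ ‖a - b‖ ≤ l + ‖a‖ * (l⁻¹ * ‖d - a‖) := by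
  have mono : ∀ {x y : A}, 0 ≤ x → x ≤ y → τ x ≤ τ y := fun hx hxy => tau_mono τ hadd hx hxy
  have haSA : IsSelfAdjoint a := .of_nonneg ha
  have hdSA : IsSelfAdjoint d := .of_nonneg hd
  have spec_a : ∀ t ∈ spectrum ℝ a, (0:ℝ) ≤ t := fun t ht => spectrum_nonneg_of_nonneg ha ht
  have spec_d : ∀ t ∈ spectrum ℝ d, (0:ℝ) ≤ t := fun t ht => spectrum_nonneg_of_nonneg hd ht
  have hgc : ∀ s : Set ℝ, (∀ t ∈ s, 0 ≤ t) → ContinuousOn (fun t : ℝ => (l + t)⁻¹) s := by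
    intro s hs
    refine ContinuousOn.inv₀ (by fun_prop) fun t ht => ?_
    have := hs t ht
    exact ne_of_gt (by linarith)
  have hfc : ∀ s : Set ℝ, (∀ t ∈ s, 0 ≤ t) →
      ContinuousOn (fun t : ℝ => t * (l + t)⁻¹) s :=
    fun s hs => (continuousOn_id' s).mul (hgc s hs)
  have hsqc : ∀ s : Set ℝ, ContinuousOn Real.sqrt s := fun s =>
    Real.continuous_sqrt.continuousOn
  -- abbreviations (as plain terms)
  -- u = cfc (l+·)⁻¹ d, v = cfc (l+·)⁻¹ a, e = cfc (·*(l+·)⁻¹) d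
  -- basic identities
  have e1 : cfc (fun t : ℝ => l + t) d = algebraMap ℝ A l + d := by
    have h := cfc_const_add l (fun t : ℝ => t) d (by fun_prop) hdSA
    rwa [cfc_id' ℝ d] at h
  have e1a : cfc (fun t : ℝ => l + t) a = algebraMap ℝ A l + a := by
    have h := cfc_const_add l (fun t : ℝ => t) a (by fun_prop) haSA
    rwa [cfc_id' ℝ a] at h
  have h1 : (algebraMap ℝ A l + d) * cfc (fun t : ℝ => (l + t)⁻¹) d = 1 := by
    rw [← e1, ← cfc_mul (fun t : ℝ => l + t) (fun t : ℝ => (l + t)⁻¹) d (by fun_prop)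
      (hgc _ spec_d)]
    refine (cfc_congr fun t ht => ?_).trans (cfc_const_one ℝ d hdSA)
    have := spec_d t ht
    exact mul_inv_cancel₀ (ne_of_gt (by linarith))
  have h2 : cfc (fun t : ℝ => (l + t)⁻¹) a * (algebraMap ℝ A l + a) = 1 := by
    rw [← e1a, ← cfc_mul (fun t : ℝ => (l + t)⁻¹) (fun t : ℝ => l + t) a (hgc _ spec_a)
      (by fun_prop)]
    refine (cfc_congr fun t ht => ?_).trans (cfc_const_one ℝ a haSA)
    have := spec_a t ht
    exact inv_mul_cancel₀ (ne_of_gt (by linarith))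
  have h_e_du : cfc (fun t : ℝ => t * (l + t)⁻¹) d = d * cfc (fun t : ℝ => (l + t)⁻¹) d := by
    rw [cfc_mul (fun t : ℝ => t) (fun t : ℝ => (l + t)⁻¹) d (by fun_prop) (hgc _ spec_d),
      cfc_id' ℝ d]
  have h_av : cfc (fun t : ℝ => t * (l + t)⁻¹) a = a * cfc (fun t : ℝ => (l + t)⁻¹) a := by
    rw [cfc_mul (fun t : ℝ => t) (fun t : ℝ => (l + t)⁻¹) a (by fun_prop) (hgc _ spec_a),
      cfc_id' ℝ a]
  have h_va : cfc (fun t : ℝ => t * (l + t)⁻¹) a = cfc (fun t : ℝ => (l + t)⁻¹) a * a := by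
    refine (cfc_congr fun t _ => mul_comm t ((l + t)⁻¹)).trans ?_
    rw [cfc_mul (fun t : ℝ => (l + t)⁻¹) (fun t : ℝ => t) a (hgc _ spec_a) (by fun_prop),
      cfc_id' ℝ a]
  have hcomm : a * cfc (fun t : ℝ => (l + t)⁻¹) a = cfc (fun t : ℝ => (l + t)⁻¹) a * a :=
    h_av.symm.trans h_va
  -- the key difference identity
  have hdiff : d * cfc (fun t : ℝ => (l + t)⁻¹) d - a * cfc (fun t : ℝ => (l + t)⁻¹) a =
      l • (cfc (fun t : ℝ => (l + t)⁻¹) a * (d - a) * cfc (fun t : ℝ => (l + t)⁻¹) d) := by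
    set u := cfc (fun t : ℝ => (l + t)⁻¹) d with hu
    set v := cfc (fun t : ℝ => (l + t)⁻¹) a with hv
    set L := algebraMap ℝ A l with hL
    have hdu : d * u = 1 - L * u := by rw [← h1]; noncomm_ring
    have hav : a * v = 1 - L * v := by
      have hc : L * v = v * L := Algebra.commutes l v
      rw [← h2, hcomm, hc]
      noncomm_ring
    have hvu : v * (d - a) * u = v - u := by
      calc v * (d - a) * u
          = v * ((L + d) * u) - (v * (L + a)) * u := by noncomm_ring
        _ = v - u := by rw [h1, h2, mul_one, one_mul]
    rw [hdu, hav, hvu, Algebra.smul_def, ← hL]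
    noncomm_ring
  -- norm bounds
  have hnu : ‖cfc (fun t : ℝ => (l + t)⁻¹) d‖ ≤ l⁻¹ := by
    refine norm_cfc_le (by positivity) fun t ht => ?_
    have h0 := spec_d t ht
    rw [Real.norm_eq_abs, abs_of_nonneg (inv_nonneg.mpr (by linarith))]
    have h' : l ≤ l + t := by linarith
    exact inv_anti₀ hl h'
  have hnv : ‖cfc (fun t : ℝ => (l + t)⁻¹) a‖ ≤ l⁻¹ := by
    refine norm_cfc_le (by positivity) fun t ht => ?_
    have h0 := spec_a t ht
    rw [Real.norm_eq_abs, abs_of_nonneg (inv_nonneg.mpr (by linarith))]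
    have h' : l ≤ l + t := by linarith
    exact inv_anti₀ hl h'
  have hdiff_norm : ‖d * cfc (fun t : ℝ => (l + t)⁻¹) d -
      a * cfc (fun t : ℝ => (l + t)⁻¹) a‖ ≤ l⁻¹ * ‖d - a‖ := by
    rw [hdiff, norm_smul, Real.norm_eq_abs, abs_of_pos hl]
    have hb1 : ‖cfc (fun t : ℝ => (l + t)⁻¹) a * (d - a) * cfc (fun t : ℝ => (l + t)⁻¹) d‖ ≤
        (l⁻¹ * ‖d - a‖) * l⁻¹ := by
      refine (norm_mul_le _ _).trans ?_
      have h' : ‖cfc (fun t : ℝ => (l + t)⁻¹) a * (d - a)‖ ≤ l⁻¹ * ‖d - a‖ :=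
        (norm_mul_le _ _).trans (mul_le_mul_of_nonneg_right hnv (norm_nonneg _))
      exact mul_le_mul h' hnu (norm_nonneg _) (by positivity)
    have heq : l * ((l⁻¹ * ‖d - a‖) * l⁻¹) = l⁻¹ * ‖d - a‖ := by
      field_simp
    calc l * ‖cfc (fun t : ℝ => (l + t)⁻¹) a * (d - a) * cfc (fun t : ℝ => (l + t)⁻¹) d‖
        ≤ l * ((l⁻¹ * ‖d - a‖) * l⁻¹) := mul_le_mul_of_nonneg_left hb1 hl.le
      _ = l⁻¹ * ‖d - a‖ := heq
  -- properties of e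
  have he0 : 0 ≤ cfc (fun t : ℝ => t * (l + t)⁻¹) d := by
    refine cfc_nonneg fun t ht => ?_
    have h0 := spec_d t ht
    exact mul_nonneg h0 (inv_nonneg.mpr (by linarith))
  have he1 : cfc (fun t : ℝ => t * (l + t)⁻¹) d ≤ 1 := by
    refine cfc_le_one _ _ fun t ht => ?_
    have h0 := spec_d t ht
    have hlt : (0:ℝ) < l + t := by linarith
    calc t * (l + t)⁻¹ ≤ (l + t) * (l + t)⁻¹ :=
          mul_le_mul_of_nonneg_right (by linarith) (inv_nonneg.mpr hlt.le)
      _ = 1 := mul_inv_cancel₀ hlt.ne'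
  have hed : cfc (fun t : ℝ => t * (l + t)⁻¹) d ≤ l⁻¹ • d := by
    have h' : cfc (fun t : ℝ => l⁻¹ * t) d = l⁻¹ • d := by
      rw [cfc_const_mul l⁻¹ (fun t : ℝ => t) d (by fun_prop), cfc_id' ℝ d]
    refine le_of_le_of_eq (cfc_mono (fun t ht => ?_) (hfc _ spec_d) (by fun_prop)) h'
    have h0 := spec_d t ht
    have h'' : (l + t)⁻¹ ≤ l⁻¹ := inv_anti₀ hl (by linarith)
    calc t * (l + t)⁻¹ ≤ t * l⁻¹ := mul_le_mul_of_nonneg_left h'' h0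
      _ = l⁻¹ * t := mul_comm _ _
  -- square roots
  have hsa2 : cfc Real.sqrt a * cfc Real.sqrt a = a := by
    rw [← cfc_mul Real.sqrt Real.sqrt a (hsqc _) (hsqc _)]
    exact (cfc_congr fun t ht => Real.mul_self_sqrt (spec_a t ht)).trans (cfc_id' ℝ a)
  have hsa0 : 0 ≤ cfc Real.sqrt a := cfc_nonneg fun t _ => Real.sqrt_nonneg t
  have hsaStar : star (cfc Real.sqrt a) = cfc Real.sqrt a :=
    (IsSelfAdjoint.of_nonneg hsa0).star_eq
  have spec_e : ∀ t ∈ spectrum ℝ (cfc (fun t : ℝ => t * (l + t)⁻¹) d), (0:ℝ) ≤ t :=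
    fun t ht => spectrum_nonneg_of_nonneg he0 ht
  have heSA : IsSelfAdjoint (cfc (fun t : ℝ => t * (l + t)⁻¹) d) := .of_nonneg he0
  have hse2 : cfc Real.sqrt (cfc (fun t : ℝ => t * (l + t)⁻¹) d) *
      cfc Real.sqrt (cfc (fun t : ℝ => t * (l + t)⁻¹) d) =
      cfc (fun t : ℝ => t * (l + t)⁻¹) d := by
    rw [← cfc_mul Real.sqrt Real.sqrt _ (hsqc _) (hsqc _)]
    exact (cfc_congr fun t ht => Real.mul_self_sqrt (spec_e t ht)).trans (cfc_id' ℝ _)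
  have hse0 : 0 ≤ cfc Real.sqrt (cfc (fun t : ℝ => t * (l + t)⁻¹) d) :=
    cfc_nonneg fun t _ => Real.sqrt_nonneg t
  have hseStar : star (cfc Real.sqrt (cfc (fun t : ℝ => t * (l + t)⁻¹) d)) =
      cfc Real.sqrt (cfc (fun t : ℝ => t * (l + t)⁻¹) d) :=
    (IsSelfAdjoint.of_nonneg hse0).star_eq
  -- the candidate b
  set sa := cfc Real.sqrt a with hsa_def
  set se := cfc Real.sqrt (cfc (fun t : ℝ => t * (l + t)⁻¹) d) with hse_def
  set ee := cfc (fun t : ℝ => t * (l + t)⁻¹) d with hee_def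
  refine ⟨sa * ee * sa, ?_, ?_, ?_, ?_⟩
  · simpa [hsaStar] using star_left_conjugate_nonneg he0 sa
  · have h := star_left_conjugate_le_conjugate he1 sa
    rw [hsaStar, mul_one, hsa2] at h
    exact h
  · -- τ (sa * ee * sa) < ⊤
    have hy : star (se * sa) * (se * sa) = sa * ee * sa := by
      rw [star_mul, hsaStar, hseStar]
      calc (sa * se) * (se * sa) = sa * (se * se) * sa := by noncomm_ring
        _ = sa * ee * sa := by rw [hse2]
    have hy' : (se * sa) * star (se * sa) = se * a * se := by
      rw [star_mul, hsaStar, hseStar]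
      calc (se * sa) * (sa * se) = se * (sa * sa) * se := by noncomm_ring
        _ = se * a * se := by rw [hsa2]
    have hτb_eq : τ (sa * ee * sa) = τ (se * a * se) := by
      rw [← hy, htr, hy']
    have h0se : 0 ≤ se * a * se := by
      simpa [hseStar] using star_left_conjugate_nonneg ha se
    have hconj_le : se * a * se ≤ ‖a‖ • ee := by
      have h := star_left_conjugate_le_conjugate haSA.le_algebraMap_norm_self se
      rw [hseStar] at h
      refine h.trans_eq ?_
      rw [Algebra.algebraMap_eq_smul_one, mul_smul_comm, smul_mul_assoc, mul_one, hse2]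
    have hτ1 : τ (sa * ee * sa) ≤ ENNReal.ofReal ‖a‖ * τ ee := by
      rw [hτb_eq]
      refine (mono h0se hconj_le).trans_eq ?_
      rw [← Complex.coe_smul]
      exact hsmul ee ‖a‖ he0 (norm_nonneg a)
    have hτ2 : τ ee ≤ ENNReal.ofReal l⁻¹ * τ d := by
      refine (mono he0 hed).trans_eq ?_
      rw [← Complex.coe_smul]
      exact hsmul d l⁻¹ hd (by positivity)
    have hfin : ENNReal.ofReal ‖a‖ * (ENNReal.ofReal l⁻¹ * τ d) < ⊤ :=
      ENNReal.mul_lt_top ENNReal.ofReal_lt_top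
        (ENNReal.mul_lt_top ENNReal.ofReal_lt_top hdτ)
    exact lt_of_le_of_lt (hτ1.trans (mul_le_mul_right hτ2 _)) hfin
  · -- norm estimate
    have hc1 : ContinuousOn (fun t : ℝ => Real.sqrt t * (t * (l + t)⁻¹) * Real.sqrt t)
        (spectrum ℝ a) := ((hsqc _).mul (hfc _ spec_a)).mul (hsqc _)
    have hw : a - sa * cfc (fun t : ℝ => t * (l + t)⁻¹) a * sa =
        cfc (fun t : ℝ => t - Real.sqrt t * (t * (l + t)⁻¹) * Real.sqrt t) a := by
      rw [cfc_sub (fun t : ℝ => t)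
          (fun t : ℝ => Real.sqrt t * (t * (l + t)⁻¹) * Real.sqrt t) a (by fun_prop) hc1,
        cfc_id' ℝ a,
        cfc_mul (fun t : ℝ => Real.sqrt t * (t * (l + t)⁻¹)) Real.sqrt a
          ((hsqc _).mul (hfc _ spec_a)) (hsqc _),
        cfc_mul Real.sqrt (fun t : ℝ => t * (l + t)⁻¹) a (hsqc _) (hfc _ spec_a)]
    have hbig : ‖cfc (fun t : ℝ => t - Real.sqrt t * (t * (l + t)⁻¹) * Real.sqrt t) a‖ ≤ l := by
      refine norm_cfc_le hl.le fun t ht => ?_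
      have h0 := spec_a t ht
      have hlt : (0:ℝ) < l + t := by linarith
      have hs : Real.sqrt t * Real.sqrt t = t := Real.mul_self_sqrt h0
      have heq : t - Real.sqrt t * (t * (l + t)⁻¹) * Real.sqrt t = l * (t * (l + t)⁻¹) := by
        rw [show Real.sqrt t * (t * (l + t)⁻¹) * Real.sqrt t =
            (Real.sqrt t * Real.sqrt t) * (t * (l + t)⁻¹) from by ring, hs]
        field_simp
        ring
      rw [heq, Real.norm_eq_abs,
        abs_of_nonneg (mul_nonneg hl.le (mul_nonneg h0 (inv_nonneg.mpr hlt.le)))]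
      have hfrac : t * (l + t)⁻¹ ≤ 1 := by
        calc t * (l + t)⁻¹ ≤ (l + t) * (l + t)⁻¹ :=
              mul_le_mul_of_nonneg_right (by linarith) (inv_nonneg.mpr hlt.le)
          _ = 1 := mul_inv_cancel₀ hlt.ne'
      calc l * (t * (l + t)⁻¹) ≤ l * 1 := mul_le_mul_of_nonneg_left hfrac hl.le
        _ = l := mul_one l
    have hd' : ‖cfc (fun t : ℝ => t * (l + t)⁻¹) a - ee‖ ≤ l⁻¹ * ‖d - a‖ := by
      rw [h_av, ← norm_neg, neg_sub, h_e_du]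
      exact hdiff_norm
    have hnsa : ‖sa‖ * ‖sa‖ = ‖a‖ := by
      calc ‖sa‖ * ‖sa‖ = ‖star sa * sa‖ := (CStarRing.norm_star_mul_self).symm
        _ = ‖a‖ := by rw [hsaStar, hsa2]
    have h2norm : ‖sa * (cfc (fun t : ℝ => t * (l + t)⁻¹) a - ee) * sa‖ ≤
        ‖a‖ * (l⁻¹ * ‖d - a‖) := by
      have t1 : ‖sa * (cfc (fun t : ℝ => t * (l + t)⁻¹) a - ee) * sa‖ ≤
          (‖sa‖ * ‖cfc (fun t : ℝ => t * (l + t)⁻¹) a - ee‖) * ‖sa‖ :=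
        (norm_mul_le _ _).trans
          (mul_le_mul_of_nonneg_right (norm_mul_le _ _) (norm_nonneg _))
      refine t1.trans ?_
      have : (‖sa‖ * ‖cfc (fun t : ℝ => t * (l + t)⁻¹) a - ee‖) * ‖sa‖ =
          ‖a‖ * ‖cfc (fun t : ℝ => t * (l + t)⁻¹) a - ee‖ := by
        rw [← hnsa]; ring
      rw [this]
      exact mul_le_mul_of_nonneg_left hd' (norm_nonneg _)
    have hsplit : a - sa * ee * sa =
        (a - sa * cfc (fun t : ℝ => t * (l + t)⁻¹) a * sa) +
          sa * (cfc (fun t : ℝ => t * (l + t)⁻¹) a - ee) * sa := by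
      noncomm_ring
    rw [hsplit]
    refine (norm_add_le _ _).trans (add_le_add ?_ h2norm)
    rw [hw]
    exact hbig

end Aux

/-- A densely defined, lower semicontinuous trace on a C*-algebra is
semifinite. -/
theorem trace_semifinite (A : Type) [NormedRing A] [StarRing A] [CStarRing A]
    [CompleteSpace A] [NormedAlgebra ℂ A] [StarModule ℂ A]
    [PartialOrder A] [StarOrderedRing A]
    (τ : A → ℝ≥0∞)
    (hadd : ∀ a b : A, 0 ≤ a → 0 ≤ b → τ (a + b) = τ a + τ b)
    (hsmul : ∀ (a : A) (c : ℝ), 0 ≤ a → 0 ≤ c →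
      τ ((c : ℂ) • a) = ENNReal.ofReal c * τ a)
    (htr : ∀ a : A, τ (star a * a) = τ (a * star a))
    (hdense : {a : A | 0 ≤ a} ⊆ closure {a : A | 0 ≤ a ∧ τ a < ⊤})
    (hlsc : ∀ r : ℝ≥0∞, IsOpen {a : {x : A // 0 ≤ x} | r < τ a.val}) :
    ∀ a : A, 0 ≤ a → τ a = ⨆ (b : A) (_ : 0 ≤ b ∧ b ≤ a ∧ τ b < ⊤), τ b := by
  letI : CStarAlgebra A :=
    { ‹NormedRing A›, ‹StarRing A›, ‹CStarRing A›, ‹CompleteSpace A›,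
      ‹NormedAlgebra ℂ A›, ‹StarModule ℂ A› with }
  intro a ha
  refine le_antisymm ?_ ?_
  · -- τ a ≤ sup
    rw [← not_lt]
    intro hlt
    set S := ⨆ (b : A) (_ : 0 ≤ b ∧ b ≤ a ∧ τ b < ⊤), τ b with hS
    obtain ⟨ε, hε, hball⟩ := Metric.isOpen_iff.mp (hlsc S) ⟨a, ha⟩ hlt
    set l : ℝ := ε / 3 with hl_def
    have hl : 0 < l := by positivity
    set δ : ℝ := ε * l / (3 * (‖a‖ + 1)) with hδ_def
    have hδ : 0 < δ := by positivity
    obtain ⟨d, hdS, hdist⟩ := Metric.mem_closure_iff.mp (hdense ha) δ hδ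
    obtain ⟨hd0, hdτ⟩ := hdS
    obtain ⟨b, hb0, hba, hbτ, hbnorm⟩ := tau_approx τ hadd hsmul htr ha hd0 hdτ hl
    have hda : ‖d - a‖ < δ := by
      rw [← norm_sub_rev]
      simpa [dist_eq_norm] using hdist
    have hclose : ‖a - b‖ < ε := by
      have h1 : ‖a‖ * (l⁻¹ * ‖d - a‖) ≤ ‖a‖ * (l⁻¹ * δ) := by
        have := norm_nonneg (d - a)
        gcongr
      have h2 : ‖a‖ * (l⁻¹ * δ) < ε / 3 := by
        rw [hδ_def]
        rw [div_eq_mul_inv]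
        have hl' : l ≠ 0 := hl.ne'
        have hA : (0:ℝ) < ‖a‖ + 1 := by positivity
        have key : ‖a‖ * (l⁻¹ * (ε * l * (3 * (‖a‖ + 1))⁻¹)) =
            ε / 3 * (‖a‖ / (‖a‖ + 1)) := by
          field_simp
        rw [key]
        have : ‖a‖ / (‖a‖ + 1) < 1 := by
          rw [div_lt_one hA]; linarith
        calc ε / 3 * (‖a‖ / (‖a‖ + 1)) < ε / 3 * 1 := by
              have hε3 : (0:ℝ) < ε / 3 := by positivity
              exact mul_lt_mul_of_pos_left this hε3
          _ = ε / 3 := mul_one _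
      calc ‖a - b‖ ≤ l + ‖a‖ * (l⁻¹ * ‖d - a‖) := hbnorm
        _ ≤ l + ‖a‖ * (l⁻¹ * δ) := by linarith
        _ < ε / 3 + ε / 3 := by rw [hl_def]; linarith
        _ < ε := by linarith
    have hmem : (⟨b, hb0⟩ : {x : A // 0 ≤ x}) ∈ Metric.ball (⟨a, ha⟩ : {x : A // 0 ≤ x}) ε := by
      rw [Metric.mem_ball, Subtype.dist_eq, dist_eq_norm, ← norm_sub_rev]
      exact hclose
    have hSb : S < τ b := hball hmem
    have hbS : τ b ≤ S := by
      rw [hS]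
      exact le_iSup_of_le b (le_iSup_of_le ⟨hb0, hba, hbτ⟩ le_rfl)
    exact absurd (hSb.trans_le hbS) (lt_irrefl S)
  · -- sup ≤ τ a
    refine iSup_le fun b => iSup_le fun hb => ?_
    exact tau_mono τ hadd hb.1 hb.2.1
end

section
/- Let (G,Λ) be a pseudo-free self-similar k-graph with g·v = v for all g ∈ G, v ∈ Λ^0, in which every cycline triple is a cycline pair. Define μ ∼ ν for μ, ν ∈ Λ if (μ, 1_G, ν) is a cycline pair. Then ∼ is an equivalence relation on Λ, and setting g·[μ] := [g·μ] and g|_{[μ]} := g|_μ gives well-defined operations: if μ ∼ ν then g·μ ∼ g·ν and g|_μ = g|_ν. -/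
section Aux

variable {P : Type} [AddCancelCommMonoid P] {G : Type} [Group G] {Λ : PGraph P}

lemma d_val0 (x : InfPath P Λ) (q : P) : Λ.d (x.val 0 q) = q := by
  have := x.d_val 0 q; rwa [zero_add] at this

lemma r_val0 (x : InfPath P Λ) (q : P) : Λ.r (x.val 0 q) = Λ.r (x.val 0 0) := by
  have := x.r_val 0 q; rwa [zero_add] at this

lemma s_val0 (x : InfPath P Λ) (q : P) : Λ.s (x.val 0 q) = Λ.r (x.val q q) := by
  have := x.s_val 0 q; rwa [zero_add] at this

lemma comp_val0 (x : InfPath P Λ) (p b : P) :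
    Λ.comp (x.val 0 p) (x.val p (p + b)) = x.val 0 (p + b) := by
  have := x.comp_val 0 p b; simp only [zero_add] at this; exact this

lemma res_val00 (σ : SelfSimilar P G Λ) (g : G) (x : InfPath P Λ) :
    σ.res g (x.val 0 0) = g := by
  rw [x.vert_val 0, σ.res_vert]

lemma actPathVal_zero (σ : SelfSimilar P G Λ) (g : G) (x : InfPath P Λ) (q : P) :
    actPathVal σ g x 0 q = σ.act g (x.val 0 q) := by
  unfold actPathVal; rw [res_val00]

/-- The action of `G` on infinite paths, under the assumption that all vertices are fixed. -/
def actPath (σ : SelfSimilar P G Λ) (hFV : ∀ (g : G) (v : Λ.V), σ.actV g v = v)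
    (g : G) (x : InfPath P Λ) : InfPath P Λ where
  val := actPathVal σ g x
  d_val p a := by simp only [actPathVal, σ.d_act, x.d_val]
  vert_val p := by
    simp only [actPathVal]
    rw [x.vert_val p, σ.act_vert, hFV, Λ.r_vert]
  r_val p a := by
    simp only [actPathVal]
    rw [σ.r_act, σ.r_act, hFV, hFV, x.r_val]
  s_val p a := by
    simp only [actPathVal]
    rw [σ.s_act, σ.r_act, hFV, hFV, x.s_val]
  comp_val p a b := by
    simp only [actPathVal]
    have hsr : Λ.s (x.val 0 p) = Λ.r (x.val p (p + a)) := by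
      rw [s_val0, x.r_val]
    have hres : σ.res g (x.val 0 (p + a)) = σ.res (σ.res g (x.val 0 p)) (x.val p (p + a)) := by
      rw [← comp_val0 x p a, σ.res_comp _ _ _ hsr]
    have hsr2 : Λ.s (x.val p (p + a)) = Λ.r (x.val (p + a) (p + a + b)) := by
      rw [x.s_val, x.r_val]
    rw [hres, ← σ.act_comp _ _ _ hsr2, x.comp_val]

lemma cycline_one_iff (σ : SelfSimilar P G Λ) (μ ν : Λ.E) :
    Cycline σ μ 1 ν ↔ (Λ.s μ = Λ.s ν ∧
      ∀ x : InfPath P Λ, Λ.r (x.val 0 0) = Λ.s ν → ∀ a : P,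
        Λ.comp μ (x.val 0 (Λ.d ν + a)) = Λ.comp ν (x.val 0 (Λ.d μ + a))) := by
  unfold Cycline
  simp only [actPathVal, σ.res_one, σ.act_one, σ.actV_one]

lemma factor_eq (Λ : PGraph P) {A B C D : Λ.E}
    (hAB : Λ.s A = Λ.r B) (hCD : Λ.s C = Λ.r D)
    (hcomp : Λ.comp A B = Λ.comp C D) (hd : Λ.d A = Λ.d C) : A = C := by
  obtain ⟨pr, _, huniq⟩ := Λ.factor (Λ.comp A B) (Λ.d A) (Λ.d B) (Λ.d_comp A B hAB)
  have h1 := huniq (A, B) ⟨hAB, rfl, rfl, rfl⟩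
  have hdD : Λ.d D = Λ.d B := by
    have hdd : Λ.d A + Λ.d B = Λ.d C + Λ.d D := by
      rw [← Λ.d_comp A B hAB, ← Λ.d_comp C D hCD, hcomp]
    rw [hd] at hdd
    exact (add_left_cancel hdd).symm
  have h2 := huniq (C, D) ⟨hCD, hcomp.symm, hd.symm, hdD⟩
  exact congrArg Prod.fst (h1.trans h2.symm)

end Aux

/-- For a pseudo-free self-similar `k`-graph fixing all vertices, in which
every cycline triple is a cycline pair, the relation `μ ∼ ν ⟺ (μ, 1, ν)` cycline is an
equivalence relation, and `g·[μ] := [g·μ]`, `g|_{[μ]} := g|_μ` are well defined: if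
`μ ∼ ν` then `g·μ ∼ g·ν` and `g|_μ = g|_ν`. -/
theorem cycline_equivalence_well_defined (k : ℕ) (G : Type) [Group G]
    (Λ : PGraph (Fin k → ℕ)) (σ : SelfSimilar (Fin k → ℕ) G Λ)
    (hpf : σ.PseudoFree) (hFV : ∀ (g : G) (v : Λ.V), σ.actV g v = v)
    (hcp : ∀ (μ ν : Λ.E) (g : G), Cycline σ μ g ν → g = 1) :
    Equivalence (fun μ ν : Λ.E => Cycline σ μ 1 ν) ∧
    ∀ (g : G) (μ ν : Λ.E), Cycline σ μ 1 ν →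
      Cycline σ (σ.act g μ) 1 (σ.act g ν) ∧ σ.res g μ = σ.res g ν := by
  -- Key: the triple (g·μ, g|_μ * (g|_ν)⁻¹, g·ν) is cycline whenever (μ,1,ν) is.
  have key : ∀ (g : G) (μ ν : Λ.E), Cycline σ μ 1 ν →
      Cycline σ (σ.act g μ) (σ.res g μ * (σ.res g ν)⁻¹) (σ.act g ν) := by
    intro g μ ν h
    rw [cycline_one_iff] at h
    obtain ⟨hs, hco⟩ := h
    constructor
    · rw [hFV, σ.s_act, σ.s_act, hFV, hFV, hs]
    · intro x hx a
      rw [σ.s_act, hFV] at hx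
      set y : InfPath _ Λ := actPath σ hFV ((σ.res g ν)⁻¹) x with hy
      have hy0 : ∀ q, y.val 0 q = σ.act ((σ.res g ν)⁻¹) (x.val 0 q) := by
        intro q
        show actPathVal σ ((σ.res g ν)⁻¹) x 0 q = _
        rw [actPathVal_zero]
      have hrY : ∀ q, Λ.r (y.val 0 q) = Λ.s ν := by
        intro q
        rw [hy0, σ.r_act, hFV, r_val0, hx]
      have hmain := hco y (hrY 0) a
      have c1 : Λ.s μ = Λ.r (y.val 0 (Λ.d ν + a)) := by rw [hrY, hs]
      have c2 : Λ.s ν = Λ.r (y.val 0 (Λ.d μ + a)) := by rw [hrY]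
      have e1 := congrArg (σ.act g) hmain
      rw [σ.act_comp _ _ _ c1, σ.act_comp _ _ _ c2, hy0, hy0,
        ← σ.act_mul, ← σ.act_mul, mul_inv_cancel, σ.act_one] at e1
      rw [σ.d_act, σ.d_act, actPathVal_zero]
      exact e1
  have hres_eq : ∀ (g : G) (μ ν : Λ.E), Cycline σ μ 1 ν → σ.res g μ = σ.res g ν := by
    intro g μ ν h
    have h1 := hcp _ _ _ (key g μ ν h)
    rwa [mul_inv_eq_one] at h1
  refine ⟨?_, ?_⟩
  · constructor
    · intro μ
      rw [cycline_one_iff]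
      exact ⟨rfl, fun x hx a => rfl⟩
    · intro μ ν h
      rw [cycline_one_iff] at h ⊢
      obtain ⟨hs, hco⟩ := h
      exact ⟨hs.symm, fun x hx a => (hco x (hx.trans hs) a).symm⟩
    · intro μ ν ρ h1 h2
      rw [cycline_one_iff] at h1 h2 ⊢
      obtain ⟨hs1, hc1⟩ := h1
      obtain ⟨hs2, hc2⟩ := h2
      refine ⟨hs1.trans hs2, ?_⟩
      intro x hx a
      have hx1 : Λ.r (x.val 0 0) = Λ.s ν := by rw [hx, ← hs2]
      have e1 := hc1 x hx1 (Λ.d ρ + a)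
      have e2 := hc2 x hx (Λ.d μ + a)
      rw [add_left_comm (Λ.d μ) (Λ.d ρ) a] at e1
      have e3 := e1.trans e2
      rw [add_comm (Λ.d ν) (Λ.d ρ + a), add_comm (Λ.d ν) (Λ.d μ + a),
        ← comp_val0 x (Λ.d ρ + a) (Λ.d ν), ← comp_val0 x (Λ.d μ + a) (Λ.d ν)] at e3
      have c1 : Λ.s μ = Λ.r (x.val 0 (Λ.d ρ + a)) := by rw [r_val0, hx, hs1, hs2]
      have c2 : Λ.s (x.val 0 (Λ.d ρ + a)) = Λ.r (x.val (Λ.d ρ + a) (Λ.d ρ + a + Λ.d ν)) := by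
        rw [s_val0, x.r_val]
      have c3 : Λ.s ρ = Λ.r (x.val 0 (Λ.d μ + a)) := by rw [r_val0, hx]
      have c4 : Λ.s (x.val 0 (Λ.d μ + a)) = Λ.r (x.val (Λ.d μ + a) (Λ.d μ + a + Λ.d ν)) := by
        rw [s_val0, x.r_val]
      rw [← Λ.comp_assoc _ _ _ c1 c2, ← Λ.comp_assoc _ _ _ c3 c4] at e3
      have s1 : Λ.s (Λ.comp μ (x.val 0 (Λ.d ρ + a))) =
          Λ.r (x.val (Λ.d ρ + a) (Λ.d ρ + a + Λ.d ν)) := by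
        rw [Λ.s_comp _ _ c1]; exact c2
      have s2 : Λ.s (Λ.comp ρ (x.val 0 (Λ.d μ + a))) =
          Λ.r (x.val (Λ.d μ + a) (Λ.d μ + a + Λ.d ν)) := by
        rw [Λ.s_comp _ _ c3]; exact c4
      have hd : Λ.d (Λ.comp μ (x.val 0 (Λ.d ρ + a))) =
          Λ.d (Λ.comp ρ (x.val 0 (Λ.d μ + a))) := by
        rw [Λ.d_comp _ _ c1, Λ.d_comp _ _ c3, d_val0, d_val0]
        exact add_left_comm (Λ.d μ) (Λ.d ρ) a
      exact factor_eq Λ s1 s2 e3 hd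
  · intro g μ ν h
    have hres := hres_eq g μ ν h
    have hk := key g μ ν h
    rw [hres, mul_inv_cancel] at hk
    exact ⟨hk, hres⟩
end
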